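/- arXiv:2410.04565 — 3 statements merged into one kernel-verified Lean document; each statement's English description precedes it below -/
import Mathlib

section
/- Let α̃ ∈ D_n and let y ∈ D_n satisfy y_i ≤ 1 − α̃_{n+1−i} for every i with 1 ≤ i ≤ n. Then there exist n×n complex positive semidefinite Hermitian matrices T, R, A with T + R + A = I such that the nonincreasingly ordered eigenvalues of R equal y and the nonincreasingly ordered eigenvalues of A equal α̃. -/
open Matrix BigOperators
open scoped ComplexOrder

/-- `v` lists the eigenvalues of `M` (a Hermitian matrix) in nonincreasing order. -/
def IsEigDesc {n : ℕ} (M : Matrix (Fin n) (Fin n) ℂ) (v : Fin n → ℝ) : Prop :=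
  Antitone v ∧ ∃ hM : M.IsHermitian, ∃ σ : Equiv.Perm (Fin n), ∀ i, v i = hM.eigenvalues (σ i)

/-- Membership in `D_n`: nonincreasing with entries in `[0,1]`. -/
def MemD {n : ℕ} (x : Fin n → ℝ) : Prop :=
  Antitone x ∧ ∀ i, x i ∈ Set.Icc (0 : ℝ) 1

open Polynomial in
lemma charpoly_unitary_conj {n : ℕ} (U : Matrix.unitaryGroup (Fin n) ℂ)
    (D : Matrix (Fin n) (Fin n) ℂ) :
    ((U : Matrix (Fin n) (Fin n) ℂ) * D * star (U : Matrix (Fin n) (Fin n) ℂ)).charpoly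
      = D.charpoly := by
  set U' : Matrix (Fin n) (Fin n) ℂ := (U : Matrix (Fin n) (Fin n) ℂ)
  have hUV : U' * star U' = 1 := Matrix.mem_unitaryGroup_iff.mp U.2
  set f : Matrix (Fin n) (Fin n) ℂ →+* Matrix (Fin n) (Fin n) ℂ[X] := (C : ℂ →+* ℂ[X]).mapMatrix
  have key : charmatrix (U' * D * star U') = f U' * charmatrix D * f (star U') := by
    simp only [charmatrix]
    rw [mul_sub, sub_mul]
    congr 1
    · rw [((Matrix.scalar_commute (X : ℂ[X]) (fun r => Commute.all _ _) (f U')).symm).eq,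
        mul_assoc, ← _root_.map_mul f, hUV, _root_.map_one f, mul_one]
    · rw [← _root_.map_mul f, ← _root_.map_mul f]
  rw [Matrix.charpoly, key, det_mul, det_mul, Matrix.charpoly,
    mul_comm (det (f U')), mul_assoc, ← det_mul, ← _root_.map_mul f, hUV, _root_.map_one f, det_one, mul_one]

open Polynomial in
lemma charpoly_hermitian {n : ℕ} {M : Matrix (Fin n) (Fin n) ℂ} (hM : M.IsHermitian) :
    M.charpoly = ∏ i, (X - C ((hM.eigenvalues i : ℂ))) := by
  conv_lhs => rw [hM.spectral_theorem, Unitary.conjStarAlgAut_apply]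
  rw [charpoly_unitary_conj hM.eigenvectorUnitary,
    Matrix.charpoly_of_upperTriangular _ (Matrix.blockTriangular_diagonal _)]
  simp [Function.comp]

open Polynomial in
lemma diag_eigs {n : ℕ} (d : Fin n → ℝ)
    (hM : (Matrix.diagonal (fun i => (d i : ℂ))).IsHermitian) :
    ∃ σ : Equiv.Perm (Fin n), ∀ i, d i = hM.eigenvalues (σ i) := by
  have h1 : (Matrix.diagonal (fun i => (d i : ℂ))).charpoly
      = ∏ i, (X - C ((d i : ℂ))) := by
    rw [Matrix.charpoly_of_upperTriangular _ (Matrix.blockTriangular_diagonal _)]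
    simp
  have h2 := charpoly_hermitian hM
  rw [h1] at h2
  have hroots : (Finset.univ.val.map (fun i => (d i : ℂ)))
      = (Finset.univ.val.map (fun i => (hM.eigenvalues i : ℂ))) := by
    have e1 : (∏ i, (X - C ((d i : ℂ)))).roots = Finset.univ.val.map (fun i => (d i : ℂ)) := by
      rw [← Polynomial.roots_multiset_prod_X_sub_C (Finset.univ.val.map (fun i => (d i : ℂ)))]
      congr 1
      rw [Finset.prod_eq_multiset_prod, Multiset.map_map]
      simp [Function.comp]
    have e2 : (∏ i, (X - C ((hM.eigenvalues i : ℂ)))).roots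
        = Finset.univ.val.map (fun i => (hM.eigenvalues i : ℂ)) := by
      rw [← Polynomial.roots_multiset_prod_X_sub_C
        (Finset.univ.val.map (fun i => (hM.eigenvalues i : ℂ)))]
      congr 1
      rw [Finset.prod_eq_multiset_prod, Multiset.map_map]
      simp [Function.comp]
    rw [← e1, ← e2, h2]
  have hreal : (Finset.univ.val.map d) = (Finset.univ.val.map hM.eigenvalues) := by
    have h3 : Multiset.map (fun x : ℝ => (x : ℂ)) (Finset.univ.val.map d)
        = Multiset.map (fun x : ℝ => (x : ℂ)) (Finset.univ.val.map hM.eigenvalues) := by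
      rw [Multiset.map_map, Multiset.map_map]; exact hroots
    exact Multiset.map_injective (fun a b hab => by exact_mod_cast hab) h3
  have hperm : List.Perm (List.ofFn d) (List.ofFn hM.eigenvalues) := by
    rw [← Multiset.coe_eq_coe]
    simpa [List.ofFn_eq_map, ← Multiset.map_coe, Fin.univ_def] using hreal
  set e := hM.eigenvalues
  set σ1 := Tuple.sort d
  set σ2 := Tuple.sort e
  have hp2 : List.Perm (List.ofFn (d ∘ σ1)) (List.ofFn (e ∘ σ2)) :=
    ((Equiv.Perm.ofFn_comp_perm σ1 d).trans hperm).trans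
      (Equiv.Perm.ofFn_comp_perm σ2 e).symm
  have s1 : (List.ofFn (d ∘ σ1)).Pairwise (· ≤ ·) := (Tuple.monotone_sort d).sortedLE_ofFn.pairwise
  have s2 : (List.ofFn (e ∘ σ2)).Pairwise (· ≤ ·) := (Tuple.monotone_sort e).sortedLE_ofFn.pairwise
  have hs : List.ofFn (d ∘ σ1) = List.ofFn (e ∘ σ2) := List.Perm.eq_of_pairwise' s1 s2 hp2
  have hfun : d ∘ σ1 = e ∘ σ2 := List.ofFn_injective hs
  refine ⟨σ1.symm.trans σ2, fun i => ?_⟩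
  have h4 := congrFun hfun (σ1.symm i)
  simpa using h4

/-- for `α̃ ∈ D_n` and `y ∈ D_n` with `y_i ≤ 1 - α̃_{n+1-i}` for all `i`,
there exist PSD Hermitian `T, R, A` with `T + R + A = I` whose nonincreasingly ordered
eigenvalues of `R` equal `y` and of `A` equal `α̃`. -/
theorem stmt4 {n : ℕ} (αt y : Fin n → ℝ) (hα : MemD αt) (hy : MemD y)
    (hle : ∀ i : Fin n, y i ≤ 1 - αt i.rev) :
    ∃ T R A : Matrix (Fin n) (Fin n) ℂ,
      T.PosSemidef ∧ R.PosSemidef ∧ A.PosSemidef ∧ T + R + A = 1 ∧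
      IsEigDesc R y ∧ IsEigDesc A αt := by
  classical
  have hT : (Matrix.diagonal (fun i : Fin n => ((1 - y i - αt i.rev : ℝ) : ℂ))).PosSemidef := by
    apply Matrix.PosSemidef.diagonal
    intro i
    have := hle i
    simp only [Pi.zero_apply]
    rw [Complex.zero_le_real]
    linarith
  have hR : (Matrix.diagonal (fun i : Fin n => ((y i : ℝ) : ℂ))).PosSemidef := by
    apply Matrix.PosSemidef.diagonal
    intro i
    simp only [Pi.zero_apply]
    rw [Complex.zero_le_real]
    exact (hy.2 i).1
  have hA : (Matrix.diagonal (fun i : Fin n => ((αt i.rev : ℝ) : ℂ))).PosSemidef := by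
    apply Matrix.PosSemidef.diagonal
    intro i
    simp only [Pi.zero_apply]
    rw [Complex.zero_le_real]
    exact (hα.2 i.rev).1
  refine ⟨_, _, _, hT, hR, hA, ?_, ?_, ?_⟩
  · rw [Matrix.diagonal_add, Matrix.diagonal_add, ← Matrix.diagonal_one]
    congr 1
    funext i
    push_cast
    ring_nf
  · refine ⟨hy.1, hR.1, ?_⟩
    exact diag_eigs y hR.1
  · refine ⟨hα.1, hA.1, ?_⟩
    obtain ⟨σ0, hσ0⟩ := diag_eigs (fun i => αt i.rev) hA.1
    refine ⟨Fin.revPerm.trans σ0, fun i => ?_⟩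
    have h5 := hσ0 i.rev
    simpa [Fin.rev_rev] using h5
end

section
/- Let T, R, A be n×n complex positive semidefinite Hermitian matrices satisfying T + R + A = I, with eigenvalues τ, ρ, α in nonincreasing order. Then for every r with 1 ≤ r ≤ n−1 and every choice of indices 1 ≤ i_1 < i_2 < … < i_r ≤ n, the Lidskii–Wielandt-type inequalities Σ_{k=1}^{r} τ_{n+1−i_k} ≥ r − Σ_{k=1}^{r} ρ_{i_k} − Σ_{j=1}^{r} α_j and Σ_{k=1}^{r} τ_{n+1−i_k} ≥ r − Σ_{j=1}^{r} ρ_j − Σ_{k=1}^{r} α_{i_k} both hold. -/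
open Matrix BigOperators
open scoped ComplexOrder


/-- Value of a `Fin n`-indexed vector at a 1-based index `m ∈ {1,…,n}` (0 otherwise). -/
def oneBased {n : ℕ} {β : Type*} [Zero β] (v : Fin n → β) (m : ℕ) : β :=
  if h : m - 1 < n then v ⟨m - 1, h⟩ else 0

namespace Stmt10Aux

variable {n : ℕ}

noncomputable def sPerm {M : Matrix (Fin n) (Fin n) ℂ} (hM : M.IsHermitian) : Equiv.Perm (Fin n) :=
  Tuple.sort (fun j => -hM.eigenvalues j)

noncomputable def sEig {M : Matrix (Fin n) (Fin n) ℂ} (hM : M.IsHermitian) : Fin n → ℝ :=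
  fun i => hM.eigenvalues (sPerm hM i)

lemma antitone_sEig {M : Matrix (Fin n) (Fin n) ℂ} (hM : M.IsHermitian) : Antitone (sEig hM) := by
  have h := Tuple.monotone_sort (fun j => -hM.eigenvalues j)
  intro i j hij
  have := h hij
  simp only [Function.comp_apply] at this
  simpa [sEig, sPerm] using this

lemma eq_sEig_of_antitone {M : Matrix (Fin n) (Fin n) ℂ} (hM : M.IsHermitian) (v : Fin n → ℝ)
    (hv : Antitone v) (σ : Equiv.Perm (Fin n)) (hσ : ∀ i, v i = hM.eigenvalues (σ i)) :
    v = sEig hM := by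
  have hmono : Monotone ((fun j => -hM.eigenvalues j) ∘ σ) := by
    intro i j hij
    simp only [Function.comp_apply, ← hσ]
    exact neg_le_neg (hv hij)
  have h := Tuple.comp_sort_eq_comp_iff_monotone.mpr hmono
  funext i
  have := congrFun h i
  simp only [Function.comp_apply, neg_inj] at this
  rw [hσ i, sEig, sPerm, ← this]

noncomputable def bEig {M : Matrix (Fin n) (Fin n) ℂ} (hM : M.IsHermitian) :
    OrthonormalBasis (Fin n) ℂ (EuclideanSpace ℂ (Fin n)) :=
  hM.eigenvectorBasis.reindex (sPerm hM).symm

lemma apply_bEig {M : Matrix (Fin n) (Fin n) ℂ} (hM : M.IsHermitian) (i : Fin n) :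
    Matrix.toEuclideanLin M (bEig hM i) = (sEig hM i : ℂ) • bEig hM i := by
  have h := hM.mulVec_eigenvectorBasis (sPerm hM i)
  rw [Matrix.toEuclideanLin_apply]
  ext j
  have := congrFun h j
  simp only [Pi.smul_apply, Complex.real_smul, smul_eq_mul] at this
  simpa [bEig, sEig, Complex.real_smul] using this



lemma psd_form {P : Matrix (Fin n) (Fin n) ℂ} (hP : P.PosSemidef) (v : (EuclideanSpace ℂ (Fin n))) :
    0 ≤ Complex.re (inner ℂ v (Matrix.toEuclideanLin P v) : ℂ) := by
  have h := hP.re_dotProduct_nonneg (WithLp.ofLp v)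
  rw [EuclideanSpace.inner_eq_star_dotProduct, Matrix.ofLp_toEuclideanLin_apply, dotProduct_comm]
  exact h

lemma inner_map_self_eq_sum (b : OrthonormalBasis (Fin n) ℂ (EuclideanSpace ℂ (Fin n))) (T : (EuclideanSpace ℂ (Fin n)) →ₗ[ℂ] (EuclideanSpace ℂ (Fin n)))
    (d : Fin n → ℝ) (hT : ∀ i, T (b i) = (d i : ℂ) • b i) (v : (EuclideanSpace ℂ (Fin n))) :
    (inner ℂ v (T v) : ℂ).re = ∑ i, d i * ‖b.repr v i‖ ^ 2 := by
  have hv : T v = ∑ i, ((d i : ℂ) * b.repr v i) • b i := by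
    conv_lhs => rw [← b.sum_repr v]
    rw [map_sum]
    congr 1
    funext i
    rw [_root_.map_smul, hT i, smul_smul, mul_comm]
  rw [hv, inner_sum]
  rw [Complex.re_sum]
  congr 1
  funext i
  rw [inner_smul_right, ← inner_conj_symm v (b i), OrthonormalBasis.repr_apply_apply]
  set z : ℂ := inner ℂ (b i) v with hz
  have h2 : z * (starRingEnd ℂ) z = ((‖z‖ ^ 2 : ℝ) : ℂ) := by
    rw [Complex.mul_conj]
    norm_cast
    simp [Complex.normSq_eq_norm_sq]
  rw [mul_assoc, h2, ← Complex.ofReal_mul, Complex.ofReal_re]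

lemma norm_sq_eq_sum (b : OrthonormalBasis (Fin n) ℂ (EuclideanSpace ℂ (Fin n))) (v : (EuclideanSpace ℂ (Fin n))) :
    ‖v‖ ^ 2 = ∑ i, ‖b.repr v i‖ ^ 2 := by
  have := inner_map_self_eq_sum b LinearMap.id (fun _ => 1) (by simp) v
  simp only [LinearMap.id_coe, id_eq, one_mul] at this
  rw [← this]
  have h := @inner_self_eq_norm_sq ℂ _ _ _ _ v
  simpa using h.symm

lemma repr_eq_zero_of_mem_span (b : OrthonormalBasis (Fin n) ℂ (EuclideanSpace ℂ (Fin n))) (s : Set (Fin n)) (v : (EuclideanSpace ℂ (Fin n)))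
    (hv : v ∈ Submodule.span ℂ (b '' s)) {i : Fin n} (hi : i ∉ s) : b.repr v i = 0 := by
  rw [OrthonormalBasis.repr_apply_apply]
  induction hv using Submodule.span_induction with
  | mem x hx =>
    obtain ⟨j, hj, rfl⟩ := hx
    exact b.orthonormal.2 (fun h => hi (h ▸ hj))
  | zero => simp
  | add x y _ _ hx hy => rw [inner_add_right, hx, hy, add_zero]
  | smul a x _ hx => rw [inner_smul_right, hx, mul_zero]


variable {n : ℕ}





lemma form_ge_of_mem_span (b : OrthonormalBasis (Fin n) ℂ (EuclideanSpace ℂ (Fin n))) (T : (EuclideanSpace ℂ (Fin n)) →ₗ[ℂ] (EuclideanSpace ℂ (Fin n)))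
    (d : Fin n → ℝ) (hT : ∀ i, T (b i) = (d i : ℂ) • b i) (s : Set (Fin n)) (c : ℝ)
    (hc : ∀ i ∈ s, c ≤ d i) (v : (EuclideanSpace ℂ (Fin n))) (hv : v ∈ Submodule.span ℂ (b '' s)) :
    c * ‖v‖ ^ 2 ≤ (inner ℂ v (T v) : ℂ).re := by
  rw [inner_map_self_eq_sum b T d hT v, norm_sq_eq_sum b v, Finset.mul_sum]
  apply Finset.sum_le_sum
  intro i _
  by_cases hi : i ∈ s
  · exact mul_le_mul_of_nonneg_right (hc i hi) (by positivity)
  · rw [repr_eq_zero_of_mem_span b s v hv hi]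
    simp

lemma form_le_of_mem_span (b : OrthonormalBasis (Fin n) ℂ (EuclideanSpace ℂ (Fin n))) (T : (EuclideanSpace ℂ (Fin n)) →ₗ[ℂ] (EuclideanSpace ℂ (Fin n)))
    (d : Fin n → ℝ) (hT : ∀ i, T (b i) = (d i : ℂ) • b i) (s : Set (Fin n)) (c : ℝ)
    (hc : ∀ i ∈ s, d i ≤ c) (v : (EuclideanSpace ℂ (Fin n))) (hv : v ∈ Submodule.span ℂ (b '' s)) :
    (inner ℂ v (T v) : ℂ).re ≤ c * ‖v‖ ^ 2 := by
  rw [inner_map_self_eq_sum b T d hT v, norm_sq_eq_sum b v, Finset.mul_sum]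
  apply Finset.sum_le_sum
  intro i _
  by_cases hi : i ∈ s
  · exact mul_le_mul_of_nonneg_right (hc i hi) (by positivity)
  · rw [repr_eq_zero_of_mem_span b s v hv hi]
    simp


lemma core {M M' : Matrix (Fin n) (Fin n) ℂ}
    (b b' : OrthonormalBasis (Fin n) ℂ (EuclideanSpace ℂ (Fin n))) (d d' : Fin n → ℝ)
    (hb : ∀ i, Matrix.toEuclideanLin M (b i) = (d i : ℂ) • b i)
    (hb' : ∀ i, Matrix.toEuclideanLin M' (b' i) = (d' i : ℂ) • b' i)
    (hd : Antitone d) (hd' : Antitone d')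
    (hle : (M' - M).PosSemidef) : ∀ k, d k ≤ d' k := by
  intro k
  have hkn : (k : ℕ) < n := k.2
  let f : Fin ((k : ℕ) + 1) → Fin n := fun j => ⟨j.1, by omega⟩
  let g : Fin (n - (k : ℕ)) → Fin n := fun j => ⟨(k : ℕ) + j.1, by omega⟩
  have hfinj : Function.Injective f := fun a b h => by
    have h2 := congrArg Fin.val h
    exact Fin.ext h2
  have hginj : Function.Injective g := fun a b h => by
    have h2 := congrArg Fin.val h
    have h3 : (k : ℕ) + a.1 = (k : ℕ) + b.1 := h2
    exact Fin.ext (by omega)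
  let V : Submodule ℂ (EuclideanSpace ℂ (Fin n)) := Submodule.span ℂ (Set.range (b ∘ f))
  let W : Submodule ℂ (EuclideanSpace ℂ (Fin n)) := Submodule.span ℂ (Set.range (b' ∘ g))
  have hbinj := b.orthonormal.linearIndependent
  have hbinj' := b'.orthonormal.linearIndependent
  have hV : Module.finrank ℂ V = (k : ℕ) + 1 := by
    rw [finrank_span_eq_card (hbinj.comp f hfinj)]
    simp
  have hW : Module.finrank ℂ W = n - (k : ℕ) := by
    rw [finrank_span_eq_card (hbinj'.comp g hginj)]
    simp
  have hdim : Module.finrank ℂ (V ⊔ W : Submodule ℂ (EuclideanSpace ℂ (Fin n))) + Module.finrank ℂ (V ⊓ W : Submodule ℂ (EuclideanSpace ℂ (Fin n)))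
      = Module.finrank ℂ V + Module.finrank ℂ W :=
    Submodule.finrank_sup_add_finrank_inf_eq V W
  have hle1 : Module.finrank ℂ (V ⊔ W : Submodule ℂ (EuclideanSpace ℂ (Fin n))) ≤ n := by
    have := Submodule.finrank_le (V ⊔ W : Submodule ℂ (EuclideanSpace ℂ (Fin n)))
    simpa [finrank_euclideanSpace_fin] using this
  have hpos : 0 < Module.finrank ℂ (V ⊓ W : Submodule ℂ (EuclideanSpace ℂ (Fin n))) := by omega
  have hne : (V ⊓ W : Submodule ℂ (EuclideanSpace ℂ (Fin n))) ≠ ⊥ := by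
    intro h
    rw [h, finrank_bot] at hpos
    exact lt_irrefl 0 hpos
  obtain ⟨v, hvmem, hvne⟩ := Submodule.exists_mem_ne_zero_of_ne_bot hne
  have hvV : v ∈ V := hvmem.1
  have hvW : v ∈ W := hvmem.2
  have h1 : d k * ‖v‖ ^ 2 ≤ (inner ℂ v (Matrix.toEuclideanLin M v) : ℂ).re := by
    apply form_ge_of_mem_span b _ d hb (Set.range f) (d k) _ v
    · rwa [← Set.range_comp]
    · rintro i ⟨j, rfl⟩
      apply hd
      rw [Fin.le_def]
      show j.1 ≤ (k : ℕ)
      omega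
  have h2 : (inner ℂ v (Matrix.toEuclideanLin M' v) : ℂ).re ≤ d' k * ‖v‖ ^ 2 := by
    apply form_le_of_mem_span b' _ d' hb' (Set.range g) (d' k) _ v
    · rwa [← Set.range_comp]
    · rintro i ⟨j, rfl⟩
      apply hd'
      rw [Fin.le_def]
      show (k : ℕ) ≤ (k : ℕ) + j.1
      omega
  have h3 : (inner ℂ v (Matrix.toEuclideanLin M v) : ℂ).re
      ≤ (inner ℂ v (Matrix.toEuclideanLin M' v) : ℂ).re := by
    have h0 := psd_form hle v
    have heq : Matrix.toEuclideanLin (M' - M) v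
        = Matrix.toEuclideanLin M' v - Matrix.toEuclideanLin M v := by
      rw [map_sub]
      simp
    rw [heq, inner_sub_right] at h0
    simp only [Complex.sub_re] at h0
    linarith
  have hnv : 0 < ‖v‖ := norm_pos_iff.mpr hvne
  have hnorm : 0 < ‖v‖ ^ 2 := by positivity
  have := h1.trans (h3.trans h2)
  exact le_of_mul_le_mul_right (by linarith [this]) hnorm


variable {n : ℕ}


lemma sEig_mono {M M' : Matrix (Fin n) (Fin n) ℂ} (hM : M.IsHermitian) (hM' : M'.IsHermitian)
    (h : (M' - M).PosSemidef) (k : Fin n) : sEig hM k ≤ sEig hM' k :=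
  core (bEig hM) (bEig hM') _ _ (apply_bEig hM) (apply_bEig hM')
    (antitone_sEig hM) (antitone_sEig hM') h k

lemma sEig_unique {M : Matrix (Fin n) (Fin n) ℂ} (hM : M.IsHermitian)
    (b : OrthonormalBasis (Fin n) ℂ (EuclideanSpace ℂ (Fin n))) (d : Fin n → ℝ)
    (hb : ∀ i, Matrix.toEuclideanLin M (b i) = (d i : ℂ) • b i)
    (hd : Antitone d) : d = sEig hM := by
  have h0 : (M - M).PosSemidef := by
    rw [sub_self]
    exact Matrix.PosSemidef.zero
  funext k
  exact le_antisymm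
    (core b (bEig hM) d (sEig hM) hb (apply_bEig hM) hd (antitone_sEig hM) h0 k)
    (core (bEig hM) b (sEig hM) d (apply_bEig hM) hb (antitone_sEig hM) hd h0 k)

lemma toEuclideanLin_one (v : (EuclideanSpace ℂ (Fin n))) : Matrix.toEuclideanLin (1 : Matrix (Fin n) (Fin n) ℂ) v = v := by
  rw [Matrix.toEuclideanLin_apply, Matrix.one_mulVec]

lemma sEig_add_smul_one {M : Matrix (Fin n) (Fin n) ℂ} (hM : M.IsHermitian) (c : ℝ)
    (hMc : (M + (c : ℂ) • 1).IsHermitian) :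
    sEig hMc = fun i => sEig hM i + c := by
  symm
  apply sEig_unique hMc (bEig hM)
  · intro i
    have : Matrix.toEuclideanLin (M + (c : ℂ) • 1) (bEig hM i)
        = Matrix.toEuclideanLin M (bEig hM i) + (c : ℂ) • (bEig hM i) := by
      rw [map_add]
      simp only [LinearMap.add_apply]
      congr 1
      rw [_root_.map_smul]
      simp only [LinearMap.smul_apply]
      rw [toEuclideanLin_one]
    rw [this, apply_bEig hM i]
    push_cast
    rw [add_smul]
  · intro i j hij
    have := antitone_sEig hM hij
    show sEig hM j + c ≤ sEig hM i + c
    linarith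

lemma re_trace_eq_sum_sEig {M : Matrix (Fin n) (Fin n) ℂ} (hM : M.IsHermitian) :
    (Matrix.trace M).re = ∑ i, sEig hM i := by
  have h1 : Matrix.trace M = ∑ i, (hM.eigenvalues i : ℂ) := by
    conv_lhs => rw [hM.spectral_theorem, Unitary.conjStarAlgAut_apply]
    rw [Matrix.trace_mul_cycle]
    have hU : star (hM.eigenvectorUnitary : Matrix (Fin n) (Fin n) ℂ)
        * (hM.eigenvectorUnitary : Matrix (Fin n) (Fin n) ℂ) = 1 :=
      Matrix.mem_unitaryGroup_iff'.mp hM.eigenvectorUnitary.2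
    rw [hU, one_mul, Matrix.trace_diagonal]
    rfl
  rw [h1, Complex.re_sum]
  simp only [Complex.ofReal_re]
  exact (Equiv.sum_comp (sPerm hM) hM.eigenvalues).symm


lemma smul_one_hermitian (c : ℝ) :
    ((c : ℂ) • (1 : Matrix (Fin n) (Fin n) ℂ)).IsHermitian := by
  unfold Matrix.IsHermitian
  rw [Matrix.conjTranspose_smul, Matrix.conjTranspose_one]
  congr 1
  simp [Complex.conj_ofReal]

lemma lidskii {X Y : Matrix (Fin n) (Fin n) ℂ} (hX : X.IsHermitian) (hY : Y.IsHermitian)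
    {r : ℕ} (hrn : r ≤ n) (hr : 0 < r) (ι : Fin r → Fin n) (hι : Function.Injective ι)
    (hXY : (X + Y).IsHermitian) :
    ∑ a, sEig hXY (ι a) ≤ ∑ a, sEig hX (ι a) + ∑ j : Fin r, sEig hY (Fin.castLE hrn j) := by
  classical
  set c : ℝ := sEig hY (Fin.castLE hrn ⟨r - 1, by omega⟩) with hc
  set e : Fin n → ℝ := hY.eigenvalues with he
  set U : Matrix (Fin n) (Fin n) ℂ := (hY.eigenvectorUnitary : Matrix (Fin n) (Fin n) ℂ) with hUdef
  have hU1 : U * star U = 1 := Matrix.mem_unitaryGroup_iff.mp hY.eigenvectorUnitary.2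
  have hU1' : star U * U = 1 := Matrix.mem_unitaryGroup_iff'.mp hY.eigenvectorUnitary.2
  set Y₁ : Matrix (Fin n) (Fin n) ℂ :=
    U * Matrix.diagonal (fun i => ((max (e i - c) 0 : ℝ) : ℂ)) * star U with hY₁def
  have hY₁ : Y₁.PosSemidef := by
    rw [hY₁def, Matrix.star_eq_conjTranspose]
    exact (Matrix.posSemidef_diagonal_iff.mpr
      (fun i => by simp [Complex.zero_le_real, le_max_right])).mul_mul_conjTranspose_same U
  have hkey : Y₁ + (c : ℂ) • 1 - Y
      = U * Matrix.diagonal (fun i => ((max (c - e i) 0 : ℝ) : ℂ)) * star U := by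
    have hone : (c : ℂ) • (1 : Matrix (Fin n) (Fin n) ℂ)
        = U * ((c : ℂ) • 1) * star U := by
      rw [Matrix.mul_smul, Matrix.smul_mul, mul_one, hU1]
    conv_lhs => rw [hY.spectral_theorem, Unitary.conjStarAlgAut_apply, hone]
    rw [← hUdef, ← he]
    have hfactor : U * Matrix.diagonal (fun i => ((max (e i - c) 0 : ℝ) : ℂ)) * star U
        + U * ((c : ℂ) • 1) * star U
        - U * Matrix.diagonal (RCLike.ofReal ∘ e) * star U
        = U * (Matrix.diagonal (fun i => ((max (e i - c) 0 : ℝ) : ℂ))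
            + (c : ℂ) • 1 - Matrix.diagonal (RCLike.ofReal ∘ e)) * star U := by
      noncomm_ring
    rw [hfactor]
    have hsmul : (c : ℂ) • (1 : Matrix (Fin n) (Fin n) ℂ)
        = Matrix.diagonal (fun _ => (c : ℂ)) := by
      ext i j
      rcases eq_or_ne i j with rfl | h
      · simp
      · simp [Matrix.one_apply_ne h, Matrix.diagonal_apply_ne _ h]
    have hdiag : Matrix.diagonal (fun i => ((max (e i - c) 0 : ℝ) : ℂ)) + (c : ℂ) • 1
        - Matrix.diagonal (RCLike.ofReal ∘ e)
        = Matrix.diagonal (fun i => ((max (c - e i) 0 : ℝ) : ℂ)) := by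
      ext i j
      rcases eq_or_ne i j with rfl | h
      · simp only [Matrix.add_apply, Matrix.sub_apply, Matrix.smul_apply,
          Matrix.diagonal_apply_eq, Matrix.one_apply_eq, Function.comp_apply,
          smul_eq_mul, mul_one]
        show ((max (e i - c) 0 : ℝ) : ℂ) + (c : ℂ) - ((e i : ℝ) : ℂ)
          = ((max (c - e i) 0 : ℝ) : ℂ)
        rcases le_total (e i) c with h | h
        · rw [max_eq_right (by linarith), max_eq_left (by linarith)]
          push_cast
          ring
        · rw [max_eq_left (by linarith), max_eq_right (by linarith)]
          push_cast
          ring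
      · simp [Matrix.diagonal_apply_ne _ h, Matrix.one_apply_ne h]
    rw [hdiag]
  have hkeyPSD : (Y₁ + (c : ℂ) • 1 - Y).PosSemidef := by
    rw [hkey, Matrix.star_eq_conjTranspose]
    exact (Matrix.posSemidef_diagonal_iff.mpr
      (fun i => by simp [Complex.zero_le_real, le_max_right])).mul_mul_conjTranspose_same U
  have hXY1 : (X + Y₁).IsHermitian := hX.add hY₁.isHermitian
  have hXYc : (X + Y₁ + (c : ℂ) • 1).IsHermitian := hXY1.add (smul_one_hermitian c)
  -- step 1
  have hstep1 : ∀ i, sEig hXY i ≤ sEig hXY1 i + c := by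
    intro i
    have hPSD : (X + Y₁ + (c : ℂ) • 1 - (X + Y)).PosSemidef := by
      have : X + Y₁ + (c : ℂ) • 1 - (X + Y) = Y₁ + (c : ℂ) • 1 - Y := by abel
      rw [this]
      exact hkeyPSD
    have h := sEig_mono hXY hXYc hPSD i
    rwa [sEig_add_smul_one hXY1 c hXYc] at h
  -- step 2
  have hg : ∀ i, 0 ≤ sEig hXY1 i - sEig hX i := by
    intro i
    have hPSD : (X + Y₁ - X).PosSemidef := by
      have : X + Y₁ - X = Y₁ := by abel
      rw [this]; exact hY₁
    linarith [sEig_mono hX hXY1 hPSD i]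
  have hsum2 : ∑ a, (sEig hXY1 (ι a) - sEig hX (ι a))
      ≤ ∑ i, (sEig hXY1 i - sEig hX i) := by
    have himg : ∑ i ∈ Finset.univ.image ι, (sEig hXY1 i - sEig hX i)
        = ∑ a : Fin r, (sEig hXY1 (ι a) - sEig hX (ι a)) :=
      Finset.sum_image (f := fun i => sEig hXY1 i - sEig hX i)
        (fun a _ b _ h => hι h)
    rw [← himg]
    exact Finset.sum_le_sum_of_subset_of_nonneg (Finset.subset_univ _)
      (fun i _ _ => hg i)
  have htrace : ∑ i, (sEig hXY1 i - sEig hX i) = ∑ i, max (e i - c) 0 := by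
    rw [Finset.sum_sub_distrib, ← re_trace_eq_sum_sEig hXY1, ← re_trace_eq_sum_sEig hX]
    have h1 : Matrix.trace (X + Y₁) = Matrix.trace X + Matrix.trace Y₁ :=
      Matrix.trace_add X Y₁
    have h2 : Matrix.trace Y₁ = ∑ i, ((max (e i - c) 0 : ℝ) : ℂ) := by
      rw [hY₁def, Matrix.trace_mul_cycle, hU1', one_mul, Matrix.trace_diagonal]
    rw [h1]
    simp only [Complex.add_re]
    rw [h2, Complex.re_sum]
    simp only [Complex.ofReal_re]
    ring
  have htopsum : ∑ i, max (e i - c) 0 = ∑ j : Fin r, (sEig hY (Fin.castLE hrn j) - c) := by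
    have hperm : ∑ i, max (e i - c) 0 = ∑ i, max (sEig hY i - c) 0 :=
      (Equiv.sum_comp (sPerm hY) (fun i => max (e i - c) 0)).symm
    rw [hperm]
    have hsplit : ∀ i : Fin n, max (sEig hY i - c) 0
        = if (i : ℕ) < r then sEig hY i - c else 0 := by
      intro i
      by_cases hi : (i : ℕ) < r
      · rw [if_pos hi, max_eq_left]
        have : i ≤ Fin.castLE hrn ⟨r - 1, by omega⟩ := by
          rw [Fin.le_def]
          show (i : ℕ) ≤ r - 1
          omega
        have := antitone_sEig hY this
        rw [← hc] at this
        linarith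
      · rw [if_neg hi, max_eq_right]
        have : Fin.castLE hrn ⟨r - 1, by omega⟩ ≤ i := by
          rw [Fin.le_def]
          show r - 1 ≤ (i : ℕ)
          omega
        have := antitone_sEig hY this
        rw [← hc] at this
        linarith
    set G : ℕ → ℝ := fun m =>
      if h : m < n then (if m < r then sEig hY ⟨m, h⟩ - c else 0) else 0 with hG
    have h1 : ∑ i : Fin n, max (sEig hY i - c) 0 = ∑ m ∈ Finset.range n, G m := by
      rw [← Fin.sum_univ_eq_sum_range]
      apply Finset.sum_congr rfl
      intro i _
      rw [hsplit i, hG]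
      simp only []
      rw [dif_pos i.2]
    have h2 : ∑ m ∈ Finset.range r, G m = ∑ m ∈ Finset.range n, G m := by
      apply Finset.sum_subset
      · intro m hm
        simp only [Finset.mem_range] at hm ⊢
        omega
      · intro m hm hnot
        simp only [Finset.mem_range] at hm hnot
        rw [hG]
        simp only []
        rw [dif_pos hm, if_neg (by omega)]
    have h3 : ∑ m ∈ Finset.range r, G m = ∑ j : Fin r, (sEig hY (Fin.castLE hrn j) - c) := by
      rw [← Fin.sum_univ_eq_sum_range]
      apply Finset.sum_congr rfl
      intro j _
      rw [hG]
      simp only []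
      rw [dif_pos (lt_of_lt_of_le j.2 hrn), if_pos j.2]
      rfl
    rw [h1, ← h2, h3]
  calc ∑ a, sEig hXY (ι a) ≤ ∑ a, (sEig hXY1 (ι a) + c) :=
        Finset.sum_le_sum (fun a _ => hstep1 (ι a))
    _ = ∑ a, sEig hX (ι a) + (∑ a, (sEig hXY1 (ι a) - sEig hX (ι a)) + r * c) := by
        rw [Finset.sum_add_distrib, Finset.sum_sub_distrib, Finset.sum_const, Finset.card_univ]
        simp [Fintype.card_fin]
        ring
    _ ≤ ∑ a, sEig hX (ι a) + (∑ i, max (e i - c) 0 + r * c) := by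
        have := hsum2.trans_eq htrace
        linarith
    _ = ∑ a, sEig hX (ι a) + ∑ j : Fin r, sEig hY (Fin.castLE hrn j) := by
        rw [htopsum, Finset.sum_sub_distrib, Finset.sum_const, Finset.card_univ]
        simp [Fintype.card_fin]

lemma sEig_one_sub {T M : Matrix (Fin n) (Fin n) ℂ} (hT : T.IsHermitian) (hM : M.IsHermitian)
    (hMT : M = 1 - T) (i : Fin n) : sEig hM i = 1 - sEig hT (Fin.rev i) := by
  have key : (fun i => 1 - sEig hT (Fin.rev i)) = sEig hM := by
    apply sEig_unique hM ((bEig hT).reindex Fin.revPerm)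
    · intro i
      rw [OrthonormalBasis.reindex_apply]
      have hsymm : Fin.revPerm.symm i = Fin.rev i := by simp
      rw [hsymm, hMT]
      have : Matrix.toEuclideanLin (1 - T) (bEig hT (Fin.rev i))
          = bEig hT (Fin.rev i) - Matrix.toEuclideanLin T (bEig hT (Fin.rev i)) := by
        rw [map_sub]
        simp only [LinearMap.sub_apply]
        rw [toEuclideanLin_one]
      rw [this, apply_bEig hT]
      push_cast
      rw [sub_smul, one_smul]
    · intro i j hij
      have hrev : Fin.rev j ≤ Fin.rev i := by
        rw [Fin.rev_le_rev]
        exact hij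
      have := antitone_sEig hT hrev
      show 1 - sEig hT (Fin.rev j) ≤ 1 - sEig hT (Fin.rev i)
      linarith
  rw [← key]

end Stmt10Aux

open Stmt10Aux in
/-- Lidskii–Wielandt-type inequalities. For `1 ≤ r ≤ n-1` and
`1 ≤ i_1 < … < i_r ≤ n` (given as a strictly monotone `idx : Fin r → ℕ`):
`Σ_{k=1}^{r} τ_{n+1-i_k} ≥ r - Σ_{k=1}^{r} ρ_{i_k} - Σ_{j=1}^{r} α_j` and
`Σ_{k=1}^{r} τ_{n+1-i_k} ≥ r - Σ_{j=1}^{r} ρ_j - Σ_{k=1}^{r} α_{i_k}`,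
where `τ, ρ, α` are the nonincreasingly ordered eigenvalues of PSD Hermitian
`T, R, A` with `T + R + A = I`. -/
theorem stmt10 {n : ℕ} (T R A : Matrix (Fin n) (Fin n) ℂ)
    (hT : T.PosSemidef) (hR : R.PosSemidef) (hA : A.PosSemidef)
    (hsum : T + R + A = 1)
    (τ ρ α : Fin n → ℝ)
    (hτ : IsEigDesc T τ) (hρ : IsEigDesc R ρ) (hα : IsEigDesc A α) :
    ∀ r : ℕ, 1 ≤ r → r ≤ n - 1 →
      ∀ idx : Fin r → ℕ, StrictMono idx → (∀ a, 1 ≤ idx a ∧ idx a ≤ n) →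
        ((∑ a, oneBased τ (n + 1 - idx a)) ≥
          (r : ℝ) - (∑ a, oneBased ρ (idx a))
            - (∑ j ∈ Finset.range r, oneBased α (j + 1))) ∧
        ((∑ a, oneBased τ (n + 1 - idx a)) ≥
          (r : ℝ) - (∑ j ∈ Finset.range r, oneBased ρ (j + 1))
            - (∑ a, oneBased α (idx a))) := by
  intro r hr1 hrn idx hmono hbound
  have hn2 : 2 ≤ n := by omega
  obtain ⟨hτa, hTH, στ, hτe⟩ := hτ
  obtain ⟨hρa, hRH, σρ, hρe⟩ := hρ
  obtain ⟨hαa, hAH, σα, hαe⟩ := hα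
  have hτs : τ = sEig hTH := eq_sEig_of_antitone hTH τ hτa στ hτe
  have hρs : ρ = sEig hRH := eq_sEig_of_antitone hRH ρ hρa σρ hρe
  have hαs : α = sEig hAH := eq_sEig_of_antitone hAH α hαa σα hαe
  have hRA : (R + A).IsHermitian := hRH.add hAH
  have hAR : (A + R).IsHermitian := hAH.add hRH
  have hMT : R + A = 1 - T := by rw [← hsum]; abel
  have hMT' : A + R = 1 - T := by rw [← hsum]; abel
  have hrev1 : ∀ i, sEig hRA i = 1 - sEig hTH (Fin.rev i) :=
    fun i => sEig_one_sub hTH hRA hMT i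
  have hrev2 : ∀ i, sEig hAR i = 1 - sEig hTH (Fin.rev i) :=
    fun i => sEig_one_sub hTH hAR hMT' i
  have hrn' : r ≤ n := by omega
  have hr0 : 0 < r := hr1
  set ι : Fin r → Fin n := fun a => ⟨idx a - 1, by
    have h1 := (hbound a).1; have h2 := (hbound a).2; omega⟩ with hιdef
  have hιinj : Function.Injective ι := by
    intro a b h
    have h2 := congrArg Fin.val h
    have h3 : idx a - 1 = idx b - 1 := h2
    have ha := (hbound a).1
    have hb := (hbound b).1
    exact hmono.injective (by omega)
  have hτv : ∀ a, oneBased τ (n + 1 - idx a) = sEig hTH (Fin.rev (ι a)) := by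
    intro a
    have h1 := (hbound a).1; have h2 := (hbound a).2
    rw [oneBased, dif_pos (show n + 1 - idx a - 1 < n by omega), hτs]
    congr 1
    apply Fin.ext
    rw [Fin.val_rev]
    show n + 1 - idx a - 1 = n - ((idx a - 1) + 1)
    omega
  have hρv : ∀ a, oneBased ρ (idx a) = sEig hRH (ι a) := by
    intro a
    have h1 := (hbound a).1; have h2 := (hbound a).2
    rw [oneBased, dif_pos (show idx a - 1 < n by omega), hρs]
  have hαv : ∀ a, oneBased α (idx a) = sEig hAH (ι a) := by
    intro a
    have h1 := (hbound a).1; have h2 := (hbound a).2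
    rw [oneBased, dif_pos (show idx a - 1 < n by omega), hαs]
  have hαtop : ∑ j ∈ Finset.range r, oneBased α (j + 1)
      = ∑ j : Fin r, sEig hAH (Fin.castLE hrn' j) := by
    rw [← Fin.sum_univ_eq_sum_range (fun m => oneBased α (m + 1)) r]
    apply Finset.sum_congr rfl
    intro j _
    have hj : (j : ℕ) < n := lt_of_lt_of_le j.2 hrn'
    rw [oneBased, dif_pos (show (j : ℕ) + 1 - 1 < n by omega), hαs]
    congr 1
  have hρtop : ∑ j ∈ Finset.range r, oneBased ρ (j + 1)
      = ∑ j : Fin r, sEig hRH (Fin.castLE hrn' j) := by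
    rw [← Fin.sum_univ_eq_sum_range (fun m => oneBased ρ (m + 1)) r]
    apply Finset.sum_congr rfl
    intro j _
    have hj : (j : ℕ) < n := lt_of_lt_of_le j.2 hrn'
    rw [oneBased, dif_pos (show (j : ℕ) + 1 - 1 < n by omega), hρs]
    congr 1
  have hLHS1 : ∑ a, sEig hRA (ι a) = r - ∑ a, oneBased τ (n + 1 - idx a) := by
    rw [Finset.sum_congr rfl (fun a _ => hrev1 (ι a)), Finset.sum_sub_distrib,
      Finset.sum_const, Finset.card_univ, Fintype.card_fin]
    rw [Finset.sum_congr rfl (fun a _ => (hτv a).symm)]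
    simp
  have hLHS2 : ∑ a, sEig hAR (ι a) = r - ∑ a, oneBased τ (n + 1 - idx a) := by
    rw [Finset.sum_congr rfl (fun a _ => hrev2 (ι a)), Finset.sum_sub_distrib,
      Finset.sum_const, Finset.card_univ, Fintype.card_fin]
    rw [Finset.sum_congr rfl (fun a _ => (hτv a).symm)]
    simp
  constructor
  · have hl := lidskii hRH hAH hrn' hr0 ι hιinj hRA
    rw [hLHS1, ← hαtop, Finset.sum_congr rfl (fun a _ => (hρv a).symm)] at hl
    linarith
  · have hl := lidskii hAH hRH hrn' hr0 ι hιinj hAR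
    rw [hLHS2, ← hρtop, Finset.sum_congr rfl (fun a _ => (hαv a).symm)] at hl
    linarith
end

section
/- (Characterization for n = 2.) Let α̃ ∈ D_2 and let ρ̃ ∈ D_2 satisfy ρ̃_1 ≤ 1 − α̃_2 and ρ̃_2 ≤ 1 − α̃_1. Then a vector τ ∈ D_2 arises as the nonincreasingly ordered eigenvalues of a 2×2 complex positive semidefinite Hermitian matrix T for which there exist 2×2 complex positive semidefinite Hermitian matrices R, A with T + R + A = I and eigenvalues ρ̃, α̃ respectively, if and only if: τ_2 ≥ 1 − ρ̃_1 − α̃_1, τ_1 ≥ 1 − ρ̃_1 − α̃_2, τ_1 ≥ 1 − ρ̃_2 − α̃_1, and τ_1 + τ_2 = 2 − ρ̃_1 − ρ̃_2 − α̃_1 − α̃_2. -/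
open Matrix BigOperators
open scoped ComplexOrder

private lemma trace_eq_sum_eig {n : ℕ} {M : Matrix (Fin n) (Fin n) ℂ} (hM : M.IsHermitian) :
    M.trace = ∑ i, (hM.eigenvalues i : ℂ) := by
  nth_rewrite 1 [hM.spectral_theorem]
  rw [Unitary.conjStarAlgAut_apply, Matrix.trace_mul_cycle, Unitary.coe_star_mul_self, one_mul, Matrix.trace_diagonal]
  rfl

private lemma shift_psd {n : ℕ} {M : Matrix (Fin n) (Fin n) ℂ} (hM : M.IsHermitian) (c : ℝ)
    (h : ∀ i, hM.eigenvalues i ≤ c) : ((c : ℂ) • 1 - M).PosSemidef := by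
  have hUU : (hM.eigenvectorUnitary : Matrix (Fin n) (Fin n) ℂ) *
      star (hM.eigenvectorUnitary : Matrix (Fin n) (Fin n) ℂ) = 1 :=
    (Matrix.mem_unitaryGroup_iff).mp hM.eigenvectorUnitary.2
  have key : (c : ℂ) • 1 - M =
      (hM.eigenvectorUnitary : Matrix (Fin n) (Fin n) ℂ) *
        diagonal (fun i => ((c - hM.eigenvalues i : ℝ) : ℂ)) *
        (star (hM.eigenvectorUnitary : Matrix (Fin n) (Fin n) ℂ)) := by
    have hd : diagonal (fun i => ((c - hM.eigenvalues i : ℝ) : ℂ)) =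
        (c : ℂ) • 1 - diagonal (RCLike.ofReal ∘ hM.eigenvalues) := by
      ext i j
      by_cases hij : i = j
      · subst hij
        simp [Matrix.sub_apply, Matrix.smul_apply, Matrix.one_apply, diagonal_apply_eq]
      · simp [Matrix.sub_apply, Matrix.smul_apply, Matrix.one_apply_ne hij,
          diagonal_apply_ne _ hij]
    rw [hd, Matrix.mul_sub, Matrix.sub_mul,
      ← Unitary.conjStarAlgAut_apply (S := ℂ) (x := diagonal (RCLike.ofReal ∘ hM.eigenvalues)), ← hM.spectral_theorem]
    congr 1
    rw [Matrix.mul_smul, Matrix.smul_mul, mul_one, hUU]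
  rw [key, Matrix.star_eq_conjTranspose]
  refine Matrix.PosSemidef.mul_mul_conjTranspose_same ?_ _
  refine Matrix.posSemidef_diagonal_iff.mpr fun i => ?_
  exact_mod_cast sub_nonneg.mpr (h i)

/-- Key forward inequality. -/
private lemma key_ineq {n : ℕ} {M1 M2 M3 : Matrix (Fin n) (Fin n) ℂ}
    (h1 : M1.IsHermitian) (h2 : M2.IsHermitian) (h3 : M3.IsHermitian)
    (hsum : M1 + M2 + M3 = 1) (j : Fin n) (c2 c3 : ℝ)
    (hb2 : ∀ i, h2.eigenvalues i ≤ c2) (hb3 : ∀ i, h3.eigenvalues i ≤ c3) :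
    1 - c2 - c3 ≤ h1.eigenvalues j := by
  set x : Fin n → ℂ := ⇑(h1.eigenvectorBasis j) with hxdef
  have hx1 : star x ⬝ᵥ x = 1 := by
    rw [hxdef, dotProduct_comm, ← EuclideanSpace.inner_eq_star_dotProduct, inner_self_eq_norm_sq_to_K,
      h1.eigenvectorBasis.orthonormal.1 j]
    norm_num
  have e1 : star x ⬝ᵥ (M1 *ᵥ x) = ((h1.eigenvalues j : ℝ) : ℂ) := by
    rw [hxdef, h1.mulVec_eigenvectorBasis]
    have : h1.eigenvalues j • ⇑(h1.eigenvectorBasis j) =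
        ((h1.eigenvalues j : ℝ) : ℂ) • ⇑(h1.eigenvectorBasis j) := by
      funext i; simp [Complex.real_smul]
    rw [this, dotProduct_smul, ← hxdef, hx1, smul_eq_mul, mul_one]
  have hq : ∀ (N : Matrix (Fin n) (Fin n) ℂ) (hN : N.IsHermitian) (c : ℝ),
      (∀ i, hN.eigenvalues i ≤ c) → star x ⬝ᵥ (N *ᵥ x) ≤ (c : ℂ) := by
    intro N hN c hc
    have := (shift_psd hN c hc).dotProduct_mulVec_nonneg x
    rw [Matrix.sub_mulVec, Matrix.smul_mulVec, Matrix.one_mulVec, dotProduct_sub,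
      dotProduct_smul, hx1, smul_eq_mul, mul_one, sub_nonneg] at this
    exact this
  have q2 := hq M2 h2 c2 hb2
  have q3 := hq M3 h3 c3 hb3
  have esum : star x ⬝ᵥ (M1 *ᵥ x) + star x ⬝ᵥ (M2 *ᵥ x) + star x ⬝ᵥ (M3 *ᵥ x) = 1 := by
    rw [← dotProduct_add, ← dotProduct_add, ← Matrix.add_mulVec, ← Matrix.add_mulVec, hsum,
      Matrix.one_mulVec, hx1]
  have hfin : ((1 : ℝ) : ℂ) - (c2 : ℂ) - (c3 : ℂ) ≤ ((h1.eigenvalues j : ℝ) : ℂ) := by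
    have h23 : star x ⬝ᵥ (M2 *ᵥ x) + star x ⬝ᵥ (M3 *ᵥ x) ≤ (c2 : ℂ) + (c3 : ℂ) :=
      add_le_add q2 q3
    have heq : ((h1.eigenvalues j : ℝ) : ℂ) =
        1 - (star x ⬝ᵥ (M2 *ᵥ x) + star x ⬝ᵥ (M3 *ᵥ x)) := by
      rw [← e1]; linear_combination esum
    rw [heq]
    push_cast
    calc (1:ℂ) - ↑c2 - ↑c3 = 1 - (↑c2 + ↑c3) := by ring
      _ ≤ _ := sub_le_sub_left h23 1
  have hfin2 : ((1 - c2 - c3 : ℝ) : ℂ) ≤ ((h1.eigenvalues j : ℝ) : ℂ) := by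
    push_cast; exact hfin
  exact_mod_cast hfin2

private lemma eig_two {M : Matrix (Fin 2) (Fin 2) ℂ} (hM : M.IsHermitian) (v : Fin 2 → ℝ)
    (htr : M.trace = ((v 0 + v 1 : ℝ) : ℂ)) (hdet : M.det = ((v 0 * v 1 : ℝ) : ℂ))
    (hv : ∀ i, 0 ≤ v i) :
    M.PosSemidef ∧ ∃ σ : Equiv.Perm (Fin 2), ∀ i, v i = hM.eigenvalues (σ i) := by
  have hs : hM.eigenvalues 0 + hM.eigenvalues 1 = v 0 + v 1 := by
    have h2 := trace_eq_sum_eig hM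
    rw [htr, Fin.sum_univ_two] at h2
    exact_mod_cast h2.symm
  have hp : hM.eigenvalues 0 * hM.eigenvalues 1 = v 0 * v 1 := by
    have h2 := hM.det_eq_prod_eigenvalues
    rw [hdet, Fin.prod_univ_two] at h2
    have h3 : ((hM.eigenvalues 0 * hM.eigenvalues 1 : ℝ) : ℂ) = ((v 0 * v 1 : ℝ) : ℂ) := by
      push_cast at h2 ⊢
      exact h2.symm
    exact_mod_cast h3
  have hz : (hM.eigenvalues 0 - v 0) * (hM.eigenvalues 0 - v 1) = 0 := by
    linear_combination (hM.eigenvalues 0) * hs - hp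
  have hσ : ∃ σ : Equiv.Perm (Fin 2), ∀ i, v i = hM.eigenvalues (σ i) := by
    rcases mul_eq_zero.mp hz with h0 | h0
    · refine ⟨1, fun i => ?_⟩
      fin_cases i
      · simpa using by linarith [sub_eq_zero.mp h0]
      · simpa using by linarith [sub_eq_zero.mp h0]
    · refine ⟨Equiv.swap 0 1, fun i => ?_⟩
      fin_cases i
      · simpa [Equiv.swap_apply_left] using by linarith [sub_eq_zero.mp h0]
      · simpa [Equiv.swap_apply_right] using by linarith [sub_eq_zero.mp h0]
  obtain ⟨σ, hσ'⟩ := hσ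
  refine ⟨hM.posSemidef_iff_eigenvalues_nonneg.mpr fun i => ?_, σ, hσ'⟩
  have h5 : hM.eigenvalues (σ (σ.symm i)) = v (σ.symm i) := (hσ' (σ.symm i)).symm
  rw [Equiv.apply_symm_apply] at h5
  rw [h5]
  exact hv _

private lemma choose_t (p0 p1 a0 a1 c1 c2 : ℝ) (hp : p1 ≤ p0) (hc : c2 ≤ c1)
    (hsum : c1 + c2 = p0 + p1 + a0 + a1) (ha : a1 ≤ a0)
    (h1 : c1 - p0 ≤ a0) (h2 : c2 - p0 ≤ a1) (h3 : c2 - p1 ≤ a0) :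
    ∃ t : ℝ, 0 ≤ t ∧ t ≤ 1 ∧
      (c1 - p0) * (c2 - p1) - (p0 - p1) * (c1 - c2) * t = a0 * a1 := by
  set m : ℝ := (p0 - p1) * (c1 - c2) with hm
  have hm0 : 0 ≤ m := mul_nonneg (by linarith) (by linarith)
  -- upper bound : a0 * a1 ≤ f1
  have hup : a0 * a1 ≤ (c1 - p0) * (c2 - p1) := by
    have he : a0 * (c1 + c2) = a0 * (p0 + p1 + a0 + a1) := by rw [hsum]
    nlinarith [mul_nonneg (by linarith : (0:ℝ) ≤ a0 - (c1 - p0))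
      (by linarith : (0:ℝ) ≤ a0 - (c2 - p1)), he]
  -- lower bound : f0 ≤ a0 * a1
  have hlo : (c1 - p1) * (c2 - p0) ≤ a0 * a1 := by
    have he : (c2 - p0) * (c1 + c2) = (c2 - p0) * (p0 + p1 + a0 + a1) := by rw [hsum]
    nlinarith [mul_nonneg (by linarith : (0:ℝ) ≤ a0 - (c2 - p0))
      (by linarith : (0:ℝ) ≤ a1 - (c2 - p0)), he]
  have hdiff : (c1 - p0) * (c2 - p1) - (c1 - p1) * (c2 - p0) = m := by rw [hm]; ring
  by_cases hmz : m = 0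
  · refine ⟨0, le_refl _, zero_le_one, ?_⟩
    have hf : (c1 - p0) * (c2 - p1) = a0 * a1 := by linarith
    rw [mul_zero]
    linarith
  · have hmpos : 0 < m := lt_of_le_of_ne hm0 (Ne.symm hmz)
    refine ⟨((c1 - p0) * (c2 - p1) - a0 * a1) / m, ?_, ?_, ?_⟩
    · exact div_nonneg (by linarith) hm0
    · rw [div_le_one hmpos]; linarith
    · field_simp; ring
/-- characterization for `n = 2`, 0-based indices: `τ_1 = τ 0`, `τ_2 = τ 1`. -/
theorem stmt12 (αt ρt : Fin 2 → ℝ) (hα : MemD αt) (hρ : MemD ρt)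
    (hρ1 : ρt 0 ≤ 1 - αt 1) (hρ2 : ρt 1 ≤ 1 - αt 0)
    (τ : Fin 2 → ℝ) (hτ : MemD τ) :
    (∃ T R A : Matrix (Fin 2) (Fin 2) ℂ,
        T.PosSemidef ∧ R.PosSemidef ∧ A.PosSemidef ∧ T + R + A = 1 ∧
        IsEigDesc T τ ∧ IsEigDesc R ρt ∧ IsEigDesc A αt) ↔
    (τ 1 ≥ 1 - ρt 0 - αt 0 ∧
     τ 0 ≥ 1 - ρt 0 - αt 1 ∧
     τ 0 ≥ 1 - ρt 1 - αt 0 ∧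
     τ 0 + τ 1 = 2 - ρt 0 - ρt 1 - αt 0 - αt 1) := by
  constructor
  · rintro ⟨T, R, A, _, _, _, hsum, ⟨hτa, hT, σT, hσT⟩, ⟨hρa, hR, σR, hσR⟩, ⟨hαa, hA, σA, hσA⟩⟩
    -- eigenvalue upper bounds
    have bT : ∀ i, hT.eigenvalues i ≤ τ 0 := by
      intro i
      have h := hσT (σT.symm i)
      rw [Equiv.apply_symm_apply] at h
      rw [← h]; exact hτa (Fin.zero_le _)
    have bR : ∀ i, hR.eigenvalues i ≤ ρt 0 := by
      intro i
      have h := hσR (σR.symm i)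
      rw [Equiv.apply_symm_apply] at h
      rw [← h]; exact hρa (Fin.zero_le _)
    have bA : ∀ i, hA.eigenvalues i ≤ αt 0 := by
      intro i
      have h := hσA (σA.symm i)
      rw [Equiv.apply_symm_apply] at h
      rw [← h]; exact hαa (Fin.zero_le _)
    -- three inequalities
    have i1 : 1 - ρt 0 - αt 0 ≤ hT.eigenvalues (σT 1) :=
      key_ineq hT hR hA hsum (σT 1) _ _ bR bA
    rw [← hσT 1] at i1
    have i2 : 1 - ρt 0 - τ 0 ≤ hA.eigenvalues (σA 1) :=
      key_ineq hA hR hT (by rw [← hsum]; abel) (σA 1) _ _ bR bT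
    rw [← hσA 1] at i2
    have i3 : 1 - αt 0 - τ 0 ≤ hR.eigenvalues (σR 1) :=
      key_ineq hR hA hT (by rw [← hsum]; abel) (σR 1) _ _ bA bT
    rw [← hσR 1] at i3
    -- trace equality
    have trgen : ∀ (M : Matrix (Fin 2) (Fin 2) ℂ) (hM : M.IsHermitian)
        (σ : Equiv.Perm (Fin 2)) (v : Fin 2 → ℝ), (∀ i, v i = hM.eigenvalues (σ i)) →
        M.trace = ((v 0 + v 1 : ℝ) : ℂ) := by
      intro M hM σ v hv
      rw [trace_eq_sum_eig hM, ← Equiv.sum_comp σ (fun i => ((hM.eigenvalues i : ℝ) : ℂ))]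
      rw [Fin.sum_univ_two, ← hv 0, ← hv 1]
      push_cast
      ring
    have htr : ((τ 0 + τ 1 : ℝ) : ℂ) + ((ρt 0 + ρt 1 : ℝ) : ℂ) + ((αt 0 + αt 1 : ℝ) : ℂ)
        = 2 := by
      rw [← trgen T hT σT τ hσT, ← trgen R hR σR ρt hσR, ← trgen A hA σA αt hσA,
        ← Matrix.trace_add, ← Matrix.trace_add, hsum, Matrix.trace_one]
      norm_num
    have htr' : τ 0 + τ 1 + (ρt 0 + ρt 1) + (αt 0 + αt 1) = 2 := by
      have : ((τ 0 + τ 1 + (ρt 0 + ρt 1) + (αt 0 + αt 1) : ℝ) : ℂ) = ((2 : ℝ) : ℂ) := by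
        push_cast
        push_cast at htr
        linear_combination htr
      exact_mod_cast this
    exact ⟨by linarith, by linarith, by linarith, by linarith⟩
  · rintro ⟨h1, h2, h3, h4⟩
    have hρ10 : ρt 1 ≤ ρt 0 := hρ.1 (by decide : (0 : Fin 2) ≤ 1)
    have hα10 : αt 1 ≤ αt 0 := hα.1 (by decide : (0 : Fin 2) ≤ 1)
    have hτ10 : τ 1 ≤ τ 0 := hτ.1 (by decide : (0 : Fin 2) ≤ 1)
    obtain ⟨t, ht0, ht1, hteq⟩ :=
      choose_t (ρt 0) (ρt 1) (αt 0) (αt 1) (1 - τ 1) (1 - τ 0)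
        hρ10 (by linarith) (by linarith) hα10 (by linarith) (by linarith) (by linarith)
    set b : ℝ := Real.sqrt ((ρt 0 - ρt 1) ^ 2 * (t * (1 - t))) with hbdef
    have hb2 : b ^ 2 = (ρt 0 - ρt 1) ^ 2 * (t * (1 - t)) := by
      rw [hbdef]
      exact Real.sq_sqrt (mul_nonneg (sq_nonneg _) (mul_nonneg ht0 (by linarith)))
    set T : Matrix (Fin 2) (Fin 2) ℂ := !![((τ 0 : ℝ) : ℂ), 0; 0, ((τ 1 : ℝ) : ℂ)] with hTdef
    set R : Matrix (Fin 2) (Fin 2) ℂ :=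
      !![((ρt 1 + (ρt 0 - ρt 1) * t : ℝ) : ℂ), (b : ℂ);
         (b : ℂ), ((ρt 0 - (ρt 0 - ρt 1) * t : ℝ) : ℂ)] with hRdef
    set A : Matrix (Fin 2) (Fin 2) ℂ :=
      !![((1 - τ 0 - (ρt 1 + (ρt 0 - ρt 1) * t) : ℝ) : ℂ), ((-b : ℝ) : ℂ);
         ((-b : ℝ) : ℂ), ((1 - τ 1 - (ρt 0 - (ρt 0 - ρt 1) * t) : ℝ) : ℂ)] with hAdef
    have hTh : T.IsHermitian := by
      show Tᴴ = T
      rw [hTdef]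
      ext i j
      fin_cases i <;> fin_cases j <;> simp [Matrix.conjTranspose_apply]
    have hRh : R.IsHermitian := by
      show Rᴴ = R
      rw [hRdef]
      ext i j
      fin_cases i <;> fin_cases j <;> simp [Matrix.conjTranspose_apply]
    have hAh : A.IsHermitian := by
      show Aᴴ = A
      rw [hAdef]
      ext i j
      fin_cases i <;> fin_cases j <;> simp [Matrix.conjTranspose_apply]
    -- eigenvalue data
    obtain ⟨hTpsd, σT, hσT⟩ := eig_two hTh τ
      (by rw [hTdef, Matrix.trace_fin_two_of]; push_cast; ring)
      (by rw [hTdef, Matrix.det_fin_two_of]; push_cast; ring)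
      (fun i => (hτ.2 i).1)
    obtain ⟨hRpsd, σR, hσR⟩ := eig_two hRh ρt
      (by rw [hRdef, Matrix.trace_fin_two_of]; push_cast; ring)
      (by
        rw [hRdef, Matrix.det_fin_two_of]
        have : (ρt 1 + (ρt 0 - ρt 1) * t) * (ρt 0 - (ρt 0 - ρt 1) * t) - b * b
            = ρt 0 * ρt 1 := by linear_combination -hb2
        exact_mod_cast this)
      (fun i => (hρ.2 i).1)
    obtain ⟨hApsd, σA, hσA⟩ := eig_two hAh αt
      (by
        rw [hAdef, Matrix.trace_fin_two_of]
        have : (1 - τ 0 - (ρt 1 + (ρt 0 - ρt 1) * t))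
            + (1 - τ 1 - (ρt 0 - (ρt 0 - ρt 1) * t)) = αt 0 + αt 1 := by linarith
        exact_mod_cast this)
      (by
        rw [hAdef, Matrix.det_fin_two_of]
        have : (1 - τ 0 - (ρt 1 + (ρt 0 - ρt 1) * t))
            * (1 - τ 1 - (ρt 0 - (ρt 0 - ρt 1) * t)) - (-b) * (-b)
            = αt 0 * αt 1 := by linear_combination hteq - hb2
        exact_mod_cast this)
      (fun i => (hα.2 i).1)
    refine ⟨T, R, A, hTpsd, hRpsd, hApsd, ?_, ⟨hτ.1, hTh, σT, hσT⟩,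
      ⟨hρ.1, hRh, σR, hσR⟩, ⟨hα.1, hAh, σA, hσA⟩⟩
    rw [hTdef, hRdef, hAdef]
    ext i j
    fin_cases i <;> fin_cases j <;>
      simp [Matrix.add_apply, Matrix.one_apply] <;> push_cast <;> ring
end
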